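/- For every grid point z_j ∈ Z_θ and every t = 0,…,T−2, one has ψ̄_t(θ, z_j) ≤ γ_t·θ + θ·Σ_{n=1}^{T−1−t} α^n·γ_{t+n}·Π_{m=0}^{n−1} F_{t+m}( z_j + (m+1)·θ − s_{t+m+1} ). -/

import Mathlib

open MeasureTheory Filter Set

theorem stmt16
    (T : ℕ) (hT : 2 ≤ T)
    (α : ℝ) (hα0 : 0 < α) (hα1 : α ≤ 1)
    (K : ℕ → ℝ) (hK0 : ∀ t, t < T → 0 ≤ K t)
    (hKmono : ∀ t, t + 2 ≤ T → α * K (t + 1) ≤ K t)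
    (ν : ℕ → MeasureTheory.Measure ℝ)
    (hprob : ∀ t, MeasureTheory.IsProbabilityMeasure (ν t))
    (hpos : ∀ t, ν t (Set.Iio 0) = 0)
    (F : ℕ → ℝ → ℝ) (hF : ∀ t x, F t x = (ν t (Set.Iic x)).toReal)
    (C : ℕ → ℝ → ℝ)
    (hCconv : ∀ t, t < T → ConvexOn ℝ Set.univ (C t))
    (hCcoer : ∀ t, t < T → Filter.Tendsto (C t) (Filter.cocompact ℝ) Filter.atTop)
    (θ : ℝ) (hθ : 0 < θ)
    (f : ℕ → ℤ → ℝ)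
    (hf : ∀ t (n : ℤ), f t n = F t (((n : ℝ) + 1) * θ) - F t ((n : ℝ) * θ))
    (Cm SU : ℕ → ℝ)
    (hCm : ∀ t, t < T → IsLeast {x | ∀ y, C t x ≤ C t y} (Cm t))
    (hSU : ∀ t, t < T → ∀ n0 : ℤ, (n0 : ℝ) * θ < Cm t → Cm t ≤ ((n0 : ℝ) + 1) * θ →
      IsLeast {w | (∃ m : ℤ, w = (m : ℝ) * θ) ∧ Cm t ≤ w ∧ C t ((n0 : ℝ) * θ) + K t < C t w} (SU t))
    (s S : ℕ → ℝ) (I Ibar : ℕ → ℝ)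
    (hsT1a : s (T - 1) ≤ Cm (T - 1))
    (hsT1b : C (T - 1) (s (T - 1)) = C (T - 1) (Cm (T - 1)) + K (T - 1))
    (hIbarT1 : Ibar (T - 1) = s (T - 1))
    (hI : ∀ t, t + 2 ≤ T →
      IsGreatest {w | (∃ m : ℤ, w = (m : ℝ) * θ) ∧ w < min (Ibar (t + 1) - θ) (Cm t)} (I t))
    (hIbar : ∀ t, t + 2 ≤ T →
      IsGreatest {w | (∃ m : ℤ, w = (m : ℝ) * θ) ∧ w ≤ I t ∧ C t (I t) + K t < C t w} (Ibar t - θ))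
    (H V : ℕ → ℝ → ℝ)
    (hHT1 : ∀ y, H (T - 1) y = C (T - 1) y)
    (hST1 : S (T - 1) = Cm (T - 1))
    (hV : ∀ t, t < T → ∀ y, V t y = if y < s t then H t (S t) + K t else H t y)
    (hHrec : ∀ t, t + 2 ≤ T → ∀ y,
      H t y = C t y + α * ∑' n : ℕ, V (t + 1) (y - ((n : ℝ) - 1) * θ) * f t ((n : ℤ) - 1))
    (hSdef : ∀ t, t + 2 ≤ T →
      IsGreatest {w | (∃ m : ℤ, w = (m : ℝ) * θ) ∧ I t ≤ w ∧ w ≤ SU t ∧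
        ∀ u, (∃ n : ℤ, u = (n : ℝ) * θ) → I t ≤ u → u ≤ SU t → H t w ≤ H t u} (S t))
    (hsdef0 : ∀ t, t + 2 ≤ T → K t = 0 → s t = S t)
    (hsdef1 : ∀ t, t + 2 ≤ T → 0 < K t →
      IsLeast {w | (∃ m : ℤ, w = (m : ℝ) * θ) ∧ Ibar t ≤ w ∧ w ≤ S t ∧ H t w ≤ H t (S t) + K t} (s t))
    (γ : ℕ → ℝ) (hγ : ∀ t, t < T → 0 ≤ γ t)
    (hLip : ∀ t, t < T → ∀ x y, |C t x - C t y| ≤ γ t * |x - y|)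
    (psib phib : ℕ → ℝ → ℝ → ℝ)
    (hpsibT1 : ∀ x y : ℝ, psib (T - 1) x y = γ (T - 1) * x)
    (hphibT1 : ∀ x y : ℝ, phib (T - 1) x y = if y < s (T - 1) then 0 else γ (T - 1) * x)
    (hpsibA : ∀ t, t + 2 ≤ T → ∀ x y : ℝ, y < s (t + 1) - θ → psib t x y = γ t * x)
    (hpsibB : ∀ t, t + 2 ≤ T → ∀ x y : ℝ, s (t + 1) - θ ≤ y → ∀ n : ℤ,
      ((n : ℝ) - 1) * θ ≤ y - s (t + 1) → y - s (t + 1) < (n : ℝ) * θ →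
      psib t x y = γ t * x
        + α * ∑ j ∈ Finset.Icc (-1 : ℤ) (n - 1), phib (t + 1) x (y - (j : ℝ) * θ) * f t j)
    (hphib : ∀ t, t + 2 ≤ T → ∀ x y : ℝ, phib t x y =
      if y < s t then 0 else if y - x < s t then psib t (y - s t + θ) y else psib t x y)
    :
    ∀ t, t + 2 ≤ T → ∀ j : ℤ,
      psib t θ ((j : ℝ) * θ) ≤ γ t * θ
        + θ * ∑ n ∈ Finset.Icc 1 (T - 1 - t), α ^ n * γ (t + n)
            * ∏ m ∈ Finset.range n, F (t + m) ((j : ℝ) * θ + ((m : ℝ) + 1) * θ - s (t + m + 1)) := by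

  -- basic facts about F and f
  have hFmono : ∀ t x y, x ≤ y → F t x ≤ F t y := by
    intro t x y hxy
    rw [hF, hF]
    haveI := hprob t
    exact ENNReal.toReal_mono (MeasureTheory.measure_ne_top _ _)
      (measure_mono (Set.Iic_subset_Iic.mpr hxy))
  have hF0 : ∀ t x, 0 ≤ F t x := by
    intro t x; rw [hF]; exact ENNReal.toReal_nonneg
  have hf0 : ∀ t (m : ℤ), 0 ≤ f t m := by
    intro t m; rw [hf]
    have := hFmono t ((m:ℝ)*θ) (((m:ℝ)+1)*θ) (by nlinarith)
    linarith
  -- the bound function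
  set B : ℕ → ℤ → ℝ := fun t j => γ t * θ
        + θ * ∑ n ∈ Finset.Icc 1 (T - 1 - t), α ^ n * γ (t + n)
            * ∏ m ∈ Finset.range n, F (t + m) ((j : ℝ) * θ + ((m : ℝ) + 1) * θ - s (t + m + 1))
    with hBdef
  -- nonnegativity of the sum part
  have hSnn : ∀ t (j : ℤ), t + 1 ≤ T →
      0 ≤ ∑ n ∈ Finset.Icc 1 (T - 1 - t), α ^ n * γ (t + n)
            * ∏ m ∈ Finset.range n, F (t + m) ((j : ℝ) * θ + ((m : ℝ) + 1) * θ - s (t + m + 1)) := by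
    intro t j ht
    apply Finset.sum_nonneg
    intro n hn
    rw [Finset.mem_Icc] at hn
    have hγn : 0 ≤ γ (t + n) := hγ _ (by omega)
    have : 0 ≤ ∏ m ∈ Finset.range n, F (t + m) ((j : ℝ) * θ + ((m : ℝ) + 1) * θ - s (t + m + 1)) :=
      Finset.prod_nonneg fun m _ => hF0 _ _
    positivity
  have hB0 : ∀ t (j : ℤ), t + 1 ≤ T → 0 ≤ B t j := by
    intro t j ht
    have h1 : 0 ≤ γ t * θ := mul_nonneg (hγ _ (by omega)) hθ.le
    have h2 := hSnn t j ht
    rw [hBdef]; dsimp only; nlinarith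
  -- monotonicity of B in j
  have hBmono : ∀ t (j k : ℤ), t + 1 ≤ T → j ≤ k → B t j ≤ B t k := by
    intro t j k ht hjk
    rw [hBdef]; dsimp only
    have hjk' : (j : ℝ) * θ ≤ (k : ℝ) * θ := by
      have : (j:ℝ) ≤ (k:ℝ) := by exact_mod_cast hjk
      nlinarith
    gcongr with n hn
    · rw [Finset.mem_Icc] at hn
      exact mul_nonneg (pow_nonneg hα0.le _) (hγ _ (by omega))
    · intro m _; exact hF0 _ _
    · exact hFmono _ _ _ (by linarith)
  -- telescoping bound on the sum of the f's
  have htel : ∀ t (n : ℤ), 0 ≤ n →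
      ∑ m ∈ Finset.Icc (-1 : ℤ) (n - 1), f t m = F t ((n:ℝ) * θ) - F t (-θ) := by
    intro t
    refine fun n hn => Int.le_induction
      (motive := fun n _ => ∑ m ∈ Finset.Icc (-1 : ℤ) (n - 1), f t m = F t ((n:ℝ) * θ) - F t (-θ))
      ?_ ?_ n hn
    · beta_reduce
      have : Finset.Icc (-1 : ℤ) (0 - 1) = {(-1 : ℤ)} := by decide
      rw [this, Finset.sum_singleton, hf]
      norm_num
    · intro n hn ih
      beta_reduce at ih ⊢
      have hins : Finset.Icc (-1 : ℤ) (n + 1 - 1) = insert n (Finset.Icc (-1 : ℤ) (n - 1)) := by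
        ext x
        simp only [Finset.mem_Icc, Finset.mem_insert]
        omega
      have hnm : n ∉ Finset.Icc (-1 : ℤ) (n - 1) := by
        simp only [Finset.mem_Icc]; omega
      rw [hins, Finset.sum_insert hnm, ih, hf]
      push_cast
      ring
  -- the base-case bound for phib at stage T - 1
  have hphiT1 : ∀ k : ℤ, phib (T - 1) θ ((k : ℝ) * θ) ≤ B (T - 1) k := by
    intro k
    have hBe : B (T - 1) k = γ (T - 1) * θ := by
      rw [hBdef]; dsimp only
      rw [Nat.sub_self]
      simp
    rw [hBe, hphibT1]
    split
    · exact mul_nonneg (hγ _ (by omega)) hθ.le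
    · exact le_rfl
  -- phib bound from psib bound, for stages t+1 with t + 3 ≤ T
  have hphistep : ∀ t, t + 3 ≤ T →
      (∀ k : ℤ, psib (t+1) θ ((k : ℝ) * θ) ≤ B (t+1) k) →
      ∀ k : ℤ, phib (t+1) θ ((k : ℝ) * θ) ≤ B (t+1) k := by
    intro t ht hpsi k
    -- s (t+1) is a grid point
    obtain ⟨m₀, hm₀⟩ : ∃ m : ℤ, s (t + 1) = (m : ℝ) * θ := by
      rcases (hK0 (t+1) (by omega)).eq_or_lt with hK | hK
      · rcases (hSdef (t+1) (by omega)).1.1 with ⟨m, hm⟩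
        exact ⟨m, by rw [hsdef0 (t+1) (by omega) hK.symm, hm]⟩
      · rcases (hsdef1 (t+1) (by omega) hK).1.1 with ⟨m, hm⟩
        exact ⟨m, hm⟩
    rw [hphib (t+1) (by omega)]
    split
    · exact hB0 (t+1) k (by omega)
    · rename_i h1
      push_neg at h1
      split
      · rename_i h2
        -- middle case : k = m₀
        have hk1 : m₀ ≤ k := by
          rw [hm₀] at h1
          have : (m₀ : ℝ) ≤ (k : ℝ) := le_of_mul_le_mul_right h1 hθ
          exact_mod_cast this
        have hk2 : k ≤ m₀ := by
          rw [hm₀] at h2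
          have : (k : ℝ) - 1 < (m₀ : ℝ) := by nlinarith
          have : (k : ℝ) < (m₀ : ℝ) + 1 := by linarith
          have : k < m₀ + 1 := by exact_mod_cast this
          omega
        have hkm : k = m₀ := le_antisymm hk2 hk1
        have harg : (k : ℝ) * θ - s (t+1) + θ = θ := by
          rw [hm₀, hkm]; ring
        rw [harg]
        exact hpsi k
      · exact hpsi k
  -- the main recursive step
  have hmain : ∀ t, t + 2 ≤ T →
      (∀ k : ℤ, phib (t+1) θ ((k : ℝ) * θ) ≤ B (t+1) k) →
      ∀ j : ℤ, psib t θ ((j : ℝ) * θ) ≤ B t j := by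
    intro t ht hphi j
    by_cases hcase : (j : ℝ) * θ < s (t+1) - θ
    · rw [hpsibA t ht _ _ hcase, hBdef]
      dsimp only
      have := hSnn t j (by omega)
      nlinarith
    · push_neg at hcase
      set n : ℤ := ⌊((j : ℝ) * θ - s (t+1)) / θ⌋ + 1 with hn
      have h1 : ((n : ℝ) - 1) * θ ≤ (j : ℝ) * θ - s (t+1) := by
        have hfl := Int.floor_le (((j : ℝ) * θ - s (t+1)) / θ)
        have he : ((n : ℝ) - 1) = ((⌊((j : ℝ) * θ - s (t+1)) / θ⌋ : ℤ) : ℝ) := by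
          rw [hn]; push_cast; ring
        rw [he]
        calc ((⌊((j : ℝ) * θ - s (t+1)) / θ⌋ : ℤ) : ℝ) * θ
            ≤ (((j : ℝ) * θ - s (t+1)) / θ) * θ := mul_le_mul_of_nonneg_right hfl hθ.le
          _ = (j : ℝ) * θ - s (t+1) := div_mul_cancel₀ _ hθ.ne'
      have h2 : (j : ℝ) * θ - s (t+1) < (n : ℝ) * θ := by
        have hcl := Int.lt_floor_add_one (((j : ℝ) * θ - s (t+1)) / θ)
        have he : (n : ℝ) = ((⌊((j : ℝ) * θ - s (t+1)) / θ⌋ : ℤ) : ℝ) + 1 := by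
          rw [hn]; push_cast; ring
        rw [he]
        calc (j : ℝ) * θ - s (t+1) = (((j : ℝ) * θ - s (t+1)) / θ) * θ :=
              (div_mul_cancel₀ _ hθ.ne').symm
          _ < (((⌊((j : ℝ) * θ - s (t+1)) / θ⌋ : ℤ) : ℝ) + 1) * θ := by nlinarith
      have hn0 : 0 ≤ n := by
        by_contra hcon
        push_neg at hcon
        have hle : n ≤ -1 := by omega
        have : (n : ℝ) ≤ -1 := by exact_mod_cast hle
        nlinarith
      rw [hpsibB t ht θ _ hcase n h1 h2]
      -- bound the sum
      have hc0 : 0 ≤ B (t+1) (j+1) := hB0 (t+1) (j+1) (by omega)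
      have hsum1 : ∑ m ∈ Finset.Icc (-1 : ℤ) (n - 1), phib (t + 1) θ ((j : ℝ) * θ - (m : ℝ) * θ) * f t m
          ≤ ∑ m ∈ Finset.Icc (-1 : ℤ) (n - 1), B (t+1) (j+1) * f t m := by
        apply Finset.sum_le_sum
        intro m hm
        rw [Finset.mem_Icc] at hm
        have hgrid : (j : ℝ) * θ - (m : ℝ) * θ = ((j - m : ℤ) : ℝ) * θ := by
          push_cast; ring
        rw [hgrid]
        apply mul_le_mul_of_nonneg_right _ (hf0 t m)
        exact le_trans (hphi (j - m)) (hBmono (t+1) (j-m) (j+1) (by omega) (by omega))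
      have hsum2 : ∑ m ∈ Finset.Icc (-1 : ℤ) (n - 1), B (t+1) (j+1) * f t m
          ≤ B (t+1) (j+1) * F t ((j:ℝ) * θ + θ - s (t+1)) := by
        rw [← Finset.mul_sum, htel t n hn0]
        have hFn : F t ((n:ℝ) * θ) ≤ F t ((j:ℝ) * θ + θ - s (t+1)) :=
          hFmono t _ _ (by linarith)
        have hFm : F t (-θ) ≥ 0 := hF0 t _
        nlinarith
      -- final identity
      have hkey : γ t * θ + α * (B (t+1) (j+1) * F t ((j:ℝ) * θ + θ - s (t+1))) = B t j := by
        have hN2 : T - 1 - (t+1) = (T - 1 - t) - 1 := by omega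
        have hN1 : T - 1 - t = (T - 1 - t - 1) + 1 := by omega
        rw [hBdef]
        beta_reduce
        rw [hN2]
        have e1 : ∀ (M : ℕ) (g : ℕ → ℝ),
            ∑ k ∈ Finset.Icc 1 M, g k = ∑ i ∈ Finset.range M, g (1 + i) := by
          intro M g
          rw [← Finset.Ico_add_one_right_eq_Icc, Finset.sum_Ico_eq_sum_range]
          simp
        conv_rhs => rw [hN1]
        rw [e1, e1, Finset.sum_range_succ']
        have hterm : ∀ i ∈ Finset.range (T - 1 - t - 1),
            α ^ (1 + (i + 1)) * γ (t + (1 + (i + 1)))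
              * ∏ m ∈ Finset.range (1 + (i + 1)),
                  F (t + m) ((j : ℝ) * θ + ((m : ℝ) + 1) * θ - s (t + m + 1))
            = (α * F t ((j:ℝ) * θ + θ - s (t+1)))
              * (α ^ (1 + i) * γ (t + 1 + (1 + i))
                * ∏ m ∈ Finset.range (1 + i),
                    F (t + 1 + m) (((j + 1 : ℤ) : ℝ) * θ + ((m : ℝ) + 1) * θ - s (t + 1 + m + 1))) := by
          intro i _
          have hi : 1 + (i + 1) = (1 + i) + 1 := by omega
          rw [hi, Finset.prod_range_succ']
          have hp0 : F (t + 0) ((j : ℝ) * θ + (((0:ℕ) : ℝ) + 1) * θ - s (t + 0 + 1))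
              = F t ((j:ℝ) * θ + θ - s (t+1)) := by
            norm_num
          rw [hp0]
          have hpm : ∀ m ∈ Finset.range (1 + i),
              F (t + (m + 1)) ((j : ℝ) * θ + (((m + 1 : ℕ) : ℝ) + 1) * θ - s (t + (m + 1) + 1))
              = F (t + 1 + m) (((j + 1 : ℤ) : ℝ) * θ + ((m : ℝ) + 1) * θ - s (t + 1 + m + 1)) := by
            intro m _
            have h1 : t + (m + 1) = t + 1 + m := by omega
            rw [h1]
            congr 1
            push_cast
            ring
          rw [Finset.prod_congr rfl hpm]
          have hidx : t + (1 + i + 1) = t + 1 + (1 + i) := by omega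
          rw [pow_succ, hidx]
          ring
        rw [Finset.sum_congr rfl hterm, ← Finset.mul_sum]
        have hg1 : α ^ (1 + 0) * γ (t + (1 + 0))
            * ∏ m ∈ Finset.range (1 + 0),
                F (t + m) ((j : ℝ) * θ + ((m : ℝ) + 1) * θ - s (t + m + 1))
            = α * γ (t + 1) * F t ((j:ℝ) * θ + θ - s (t+1)) := by
          rw [Finset.prod_range_one]
          norm_num
        rw [hg1]
        ring
      calc γ t * θ + α * ∑ m ∈ Finset.Icc (-1 : ℤ) (n - 1),
              phib (t + 1) θ ((j : ℝ) * θ - (m : ℝ) * θ) * f t m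
          ≤ γ t * θ + α * (B (t+1) (j+1) * F t ((j:ℝ) * θ + θ - s (t+1))) := by
            have := le_trans hsum1 hsum2
            nlinarith
        _ = B t j := hkey
  -- downward induction
  have hkey : ∀ d t, t + 2 ≤ T → T ≤ t + 2 + d → ∀ j : ℤ,
      psib t θ ((j : ℝ) * θ) ≤ B t j := by
    intro d
    induction d with
    | zero =>
      intro t ht hle j
      have hTt : t + 1 = T - 1 := by omega
      apply hmain t ht _ j
      intro k
      rw [hTt]
      exact hphiT1 k
    | succ d ih =>
      intro t ht hle j
      by_cases hc : T ≤ t + 2 + d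
      · exact ih t ht hc j
      · have ht3 : t + 3 ≤ T := by omega
        apply hmain t ht _ j
        exact hphistep t ht3 (fun k => ih (t+1) (by omega) (by omega) k)
  intro t ht j
  exact hkey T t ht (by omega) j
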